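/- Let H be a Hilbert space, U ⊆ H a closed subspace with inclusion ι_U : U → H, and A : dom(A) ⊆ H → H, B : dom(B) ⊆ U → U densely defined closed operators. Let S ∈ L(H) with ran(S), ran(S*) ⊆ U, S[dom(A)] ⊆ dom(A) and [S,A] continuous, and assume A* leaves U invariant in the sense that A*S*v ∈ U for v ∈ dom(A*). Suppose there exists E : dom(B) → dom(A) with ι_U* E x = x and ι_U* A E x = B x for all x ∈ dom(B). Then for every v ∈ dom(A*): ι_U* S* v ∈ dom(B*) and B* ι_U* S* v = ι_U* A* S* v. -/

import Mathlib

open Filter Topology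

noncomputable section

/-- localisation lemma. `U` a closed subspace of `H` with inclusion `ι_U`
(and `ι_U* = ` orthogonal projection onto `U`), `A` on `H` and `B` on `U` densely defined
closed, `S` bounded with ranges of `S, S*` in `U`, `S` leaving `dom A` invariant with
continuous commutator `[S,A]`, `A*` leaving `U` invariant (`A*S*v ∈ U`), and `E` an
extension operator with `ι_U* E x = x`, `ι_U* A E x = B x`. Then for every `v ∈ dom A*`:
`ι_U* S* v ∈ dom B*` and `B* ι_U* S* v = ι_U* A* S* v`. -/
theorem localisation_extension_lemma
    {H : Type*} [NormedAddCommGroup H] [InnerProductSpace ℝ H] [CompleteSpace H]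
    (U : Submodule ℝ H) (hU : IsClosed (U : Set H)) [CompleteSpace U]
    (A : H →ₗ.[ℝ] H) (B : U →ₗ.[ℝ] U)
    (hAdense : Dense (A.domain : Set H)) (hAclosed : A.IsClosed)
    (hBdense : Dense (B.domain : Set U)) (hBclosed : B.IsClosed)
    (S : H →L[ℝ] H)
    (hranS : ∀ x : H, S x ∈ U)
    (hranS' : ∀ x : H, ContinuousLinearMap.adjoint S x ∈ U)
    (hSA : ∀ x ∈ A.domain, S x ∈ A.domain)
    (T : H →L[ℝ] H)
    (hT : ∀ x : A.domain, T (x : H) = S (A x) - A ⟨S (x : H), hSA x x.2⟩)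
    (hAstarU : ∀ v : A.adjoint.domain,
      ∃ h : ContinuousLinearMap.adjoint S (v : H) ∈ A.adjoint.domain,
        A.adjoint ⟨ContinuousLinearMap.adjoint S (v : H), h⟩ ∈ U)
    (E : B.domain → A.domain)
    (hE₁ : ∀ x : B.domain, Submodule.orthogonalProjectionOnto U ((E x : H)) = x)
    (hE₂ : ∀ x : B.domain, Submodule.orthogonalProjectionOnto U (A (E x)) = B x) :
    ∀ v : A.adjoint.domain,
      ∃ (hSv : ContinuousLinearMap.adjoint S (v : H) ∈ A.adjoint.domain)
        (hmem : Submodule.orthogonalProjectionOnto U (ContinuousLinearMap.adjoint S (v : H)) ∈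
          B.adjoint.domain),
        B.adjoint ⟨Submodule.orthogonalProjectionOnto U (ContinuousLinearMap.adjoint S (v : H)), hmem⟩ =
          Submodule.orthogonalProjectionOnto U
            (A.adjoint ⟨ContinuousLinearMap.adjoint S (v : H), hSv⟩) := by
  intro v
  obtain ⟨hSv, hAU⟩ := hAstarU v
  set w : H := ContinuousLinearMap.adjoint S (v : H) with hw
  have hwU : w ∈ U := hranS' (v : H)
  set z : U := Submodule.orthogonalProjectionOnto U (A.adjoint ⟨w, hSv⟩) with hz
  have key : ∀ x : B.domain,
      (inner ℝ z (x : U) : ℝ) = inner ℝ (Submodule.orthogonalProjectionOnto U w) (B x) := by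
    intro x
    have h1 : (inner ℝ z (x : U) : ℝ) = inner ℝ (A.adjoint ⟨w, hSv⟩) (x : H) := by
      rw [hz, Submodule.inner_orthogonalProjectionOnto_eq_of_mem_right]
    have h2 : (inner ℝ (A.adjoint ⟨w, hSv⟩) (x : H) : ℝ)
        = inner ℝ (A.adjoint ⟨w, hSv⟩) ((E x : A.domain) : H) := by
      rw [← hE₁ x]
      rw [show (inner ℝ (A.adjoint ⟨w, hSv⟩)
          ((Submodule.orthogonalProjectionOnto U ((E x : A.domain) : H) : U) : H) : ℝ)
        = inner ℝ (⟨A.adjoint ⟨w, hSv⟩, hAU⟩ : U)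
            (Submodule.orthogonalProjectionOnto U ((E x : A.domain) : H)) from rfl]
      rw [Submodule.inner_orthogonalProjectionOnto_eq_of_mem_left]
    have h3 : (inner ℝ (A.adjoint ⟨w, hSv⟩) ((E x : A.domain) : H) : ℝ)
        = inner ℝ w (A (E x)) := by
      exact LinearPMap.adjoint_isFormalAdjoint hAdense ⟨w, hSv⟩ (E x)
    have h4 : (inner ℝ (Submodule.orthogonalProjectionOnto U w) (B x) : ℝ)
        = inner ℝ w (A (E x)) := by
      rw [← hE₂ x, Submodule.inner_orthogonalProjectionOnto_eq_of_mem_right]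
      rw [show (inner ℝ w ((Submodule.orthogonalProjectionOnto U (A (E x)) : U) : H) : ℝ)
        = inner ℝ (⟨w, hwU⟩ : U) (Submodule.orthogonalProjectionOnto U (A (E x))) from rfl]
      rw [Submodule.inner_orthogonalProjectionOnto_eq_of_mem_left]
    rw [h1, h2, h3, h4]
  have hmem : Submodule.orthogonalProjectionOnto U w ∈ B.adjoint.domain :=
    B.mem_adjoint_domain_of_exists _ ⟨z, fun x => key x⟩
  exact ⟨hSv, hmem, LinearPMap.adjoint_apply_eq hBdense ⟨_, hmem⟩ (fun x => key x)⟩
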